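/- For every 2 ≤ i ≤ m one has α(d,i)_i = α(d,i−2)_{i−1} + 1; in particular α(d,i)_i > α(d,i−2)_{i−1}, so the skew shape α(d,i)/α(d,i−2) is not a vertical strip. (By Pieri's formula, S_{α(d,i)}E therefore does not occur in S_{α(d,i−2)}E ⊗ S_{e_{i−1}+e_i}E, which forces the composite φ(d,i−1) ∘ φ(d,i) of two consecutive equivariant differentials of F(d) to vanish, so F(d) is a complex.) -/

import Mathlib

/-- `lam m d j` is `λ_j = e_0 + Σ_{k=j+1}^m (e_k - 1)` where `e_0 = d 0` and
`e_k = d k - d (k-1)`. -/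
def lam (m : ℕ) (d : ℕ → ℤ) (j : ℕ) : ℤ :=
  d 0 + ∑ k ∈ Finset.Ioc j m, (d k - d (k - 1) - 1)

/-- `alpha m d i j` is the `j`-th entry (for `1 ≤ j ≤ m`) of the partition `α(d,i)`. -/
def alpha (m : ℕ) (d : ℕ → ℤ) (i j : ℕ) : ℤ :=
  lam m d j + if j ≤ i then d j - d (j - 1) else 0

/-- For `2 ≤ i ≤ m` one has `α(d,i)_i = α(d,i-2)_{i-1} + 1`, in particular
`α(d,i)_i > α(d,i-2)_{i-1}`, so the skew shape `α(d,i)/α(d,i-2)` is not a vertical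
strip (it fails the condition `μ_j ≤ λ_{j-1}` at `j = i`).  By Pieri's formula this
forces the composite of two consecutive differentials of `F(d)` to vanish. -/
theorem alpha_two_steps_not_vertical_strip (m : ℕ) (hm : 1 ≤ m)
    (d : ℕ → ℤ) (hd : ∀ i < m, d i < d (i + 1)) :
    ∀ i, 2 ≤ i → i ≤ m →
      alpha m d i i = alpha m d (i - 2) (i - 1) + 1 ∧
      alpha m d (i - 2) (i - 1) < alpha m d i i ∧
      ¬ (∀ j, 2 ≤ j → j ≤ m → alpha m d i j ≤ alpha m d (i - 2) (j - 1)) := by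
  intro i h2 him
  obtain ⟨k, rfl⟩ : ∃ k, i = k + 2 := ⟨i - 2, by omega⟩
  have hsub2 : k + 2 - 2 = k := by omega
  have hsub1 : k + 2 - 1 = k + 1 := by omega
  have hins : Finset.Ioc (k + 1) m = insert (k + 2) (Finset.Ioc (k + 2) m) := by
    rw [Finset.Ioc_insert_left (by omega : k + 2 ≤ m), ← Finset.Icc_add_one_left_eq_Ioc]; rfl
  have hlam : lam m d (k + 1) = lam m d (k + 2) + (d (k + 2) - d (k + 1) - 1) := by
    simp only [lam, hins, Finset.sum_insert (by simp : k + 2 ∉ Finset.Ioc (k + 2) m)]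
    have : k + 2 - 1 = k + 1 := by omega
    rw [this]; ring
  have key : alpha m d (k + 2) (k + 2) = alpha m d k (k + 1) + 1 := by
    simp only [alpha, hsub1, if_pos (le_refl (k + 2)),
      if_neg (by omega : ¬ k + 1 ≤ k), hlam]
    ring
  rw [hsub2, hsub1]
  refine ⟨key, by omega, fun h => ?_⟩
  have := h (k + 2) (by omega) him
  rw [hsub1] at this
  omega
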